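/- Let p be a prime, R an F_p-algebra, λ ∈ R. The ideal (X^p, Y^p) of the Hopf algebra H = R[X,Y,1/(1+λX)] (with Δ(X)=X⊗1+(1+λX)⊗X, Δ(Y)=Y⊗1+(1+λX)⊗Y, ε(X)=ε(Y)=0) is a Hopf ideal: Δ(X^p) and Δ(Y^p) lie in (X^p,Y^p)⊗H + H⊗(X^p,Y^p), ε(X^p)=ε(Y^p)=0, and S(X^p), S(Y^p) ∈ (X^p, Y^p). Hence the quotient A^{(λ)}_R = R[X,Y]/(X^p,Y^p) inherits a Hopf algebra structure with Δ(X)=X⊗1+(1+λX)⊗X and Δ(Y)=Y⊗1+(1+λX)⊗Y. -/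

import Mathlib

open scoped TensorProduct

noncomputable section

/-- The coordinate ring `H = R[X,Y, 1/(1+λX)]` of `ℋ^{(λ)}_R`. -/
abbrev HA (R : Type*) [CommRing R] (lam : R) : Type _ :=
  Localization.Away
    (1 + MvPolynomial.C lam * MvPolynomial.X 0 : MvPolynomial (Fin 2) R)

/-- The image of `X` in `H`. -/
def hX (R : Type*) [CommRing R] (lam : R) : HA R lam :=
  algebraMap (MvPolynomial (Fin 2) R) (HA R lam) (MvPolynomial.X 0)

/-- The image of `Y` in `H`. -/
def hY (R : Type*) [CommRing R] (lam : R) : HA R lam :=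
  algebraMap (MvPolynomial (Fin 2) R) (HA R lam) (MvPolynomial.X 1)

/-- The quotient Hopf algebra `A^{(λ)}_R = R[X,Y]/(X^p, Y^p)`. -/
abbrev Aq (p : ℕ) (R : Type*) [CommRing R] : Type _ :=
  MvPolynomial (Fin 2) R ⧸
    Ideal.span ({MvPolynomial.X 0 ^ p, MvPolynomial.X 1 ^ p} :
      Set (MvPolynomial (Fin 2) R))

/-- The class of `X` in `A^{(λ)}_R`. -/
def aX (p : ℕ) (R : Type*) [CommRing R] : Aq p R :=
  Ideal.Quotient.mk _ (MvPolynomial.X 0)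

/-- The class of `Y` in `A^{(λ)}_R`. -/
def aY (p : ℕ) (R : Type*) [CommRing R] : Aq p R :=
  Ideal.Quotient.mk _ (MvPolynomial.X 1)


lemma frob {S : Type*} [CommSemiring S] {p : ℕ} (hp : p.Prime) (hS : (p : S) = 0)
    (x y : S) : (x + y) ^ p = x ^ p + y ^ p := by
  obtain ⟨r, hr⟩ := exists_add_pow_prime_eq hp x y
  simp [hr, hS]

lemma castp (R : Type*) {S : Type*} [CommRing R] [Semiring S] [Algebra R S] {p : ℕ} [CharP R p] :
    (p : S) = 0 := by
  rw [← map_natCast (algebraMap R S) p, CharP.cast_eq_zero, map_zero]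

set_option maxHeartbeats 1000000 in
/-- the ideal `(X^p, Y^p)` of `H = R[X,Y,1/(1+λX)]` is a Hopf ideal,
and the quotient `A^{(λ)}_R = R[X,Y]/(X^p,Y^p)` inherits a Hopf algebra structure
with `Δ(X)=X⊗1+(1+λX)⊗X`, `Δ(Y)=Y⊗1+(1+λX)⊗Y`. -/
theorem stmt5 (p : ℕ) (hp : p.Prime) (R : Type*) [CommRing R] [CharP R p] (lam : R) :
    (∀ (Δ : HA R lam →ₐ[R] HA R lam ⊗[R] HA R lam) (ε : HA R lam →ₐ[R] R)
       (S : HA R lam →ₐ[R] HA R lam),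
      Δ (hX R lam) = hX R lam ⊗ₜ 1 +
          (1 + algebraMap R (HA R lam) lam * hX R lam) ⊗ₜ hX R lam →
      Δ (hY R lam) = hY R lam ⊗ₜ 1 +
          (1 + algebraMap R (HA R lam) lam * hX R lam) ⊗ₜ hY R lam →
      ε (hX R lam) = 0 → ε (hY R lam) = 0 →
      (1 + algebraMap R (HA R lam) lam * hX R lam) * S (hX R lam) = - hX R lam →
      (1 + algebraMap R (HA R lam) lam * hX R lam) * S (hY R lam) = - hY R lam →
      -- the ideal I = (X^p, Y^p)
      ∀ I : Ideal (HA R lam), I = Ideal.span {hX R lam ^ p, hY R lam ^ p} →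
        (Δ (hX R lam ^ p) ∈
            Ideal.map (Algebra.TensorProduct.includeLeft :
              HA R lam →ₐ[R] HA R lam ⊗[R] HA R lam) I ⊔
            Ideal.map (Algebra.TensorProduct.includeRight :
              HA R lam →ₐ[R] HA R lam ⊗[R] HA R lam) I) ∧
        (Δ (hY R lam ^ p) ∈
            Ideal.map (Algebra.TensorProduct.includeLeft :
              HA R lam →ₐ[R] HA R lam ⊗[R] HA R lam) I ⊔
            Ideal.map (Algebra.TensorProduct.includeRight :
              HA R lam →ₐ[R] HA R lam ⊗[R] HA R lam) I) ∧
        ε (hX R lam ^ p) = 0 ∧ ε (hY R lam ^ p) = 0 ∧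
        S (hX R lam ^ p) ∈ I ∧ S (hY R lam ^ p) ∈ I) ∧
    -- the quotient inherits the Hopf structure
    (∃ ΔA : Aq p R →ₐ[R] Aq p R ⊗[R] Aq p R,
      ΔA (aX p R) = aX p R ⊗ₜ 1 +
          (1 + algebraMap R (Aq p R) lam * aX p R) ⊗ₜ aX p R ∧
      ΔA (aY p R) = aY p R ⊗ₜ 1 +
          (1 + algebraMap R (Aq p R) lam * aX p R) ⊗ₜ aY p R) := by
  classical
  have hpS : ((p : ℕ) : HA R lam ⊗[R] HA R lam) = 0 := castp R
  have hpA : ((p : ℕ) : Aq p R ⊗[R] Aq p R) = 0 := castp R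
  have hpH : ((p : ℕ) : HA R lam) = 0 := castp R
  -- the element 1 + λX as image of a polynomial
  have hualg : (1 + algebraMap R (HA R lam) lam * hX R lam) =
      algebraMap (MvPolynomial (Fin 2) R) (HA R lam)
        (1 + MvPolynomial.C lam * MvPolynomial.X 0) := by
    rw [map_add, map_one, map_mul, IsScalarTower.algebraMap_apply R (MvPolynomial (Fin 2) R)]
    rfl
  have huunit : IsUnit (1 + algebraMap R (HA R lam) lam * hX R lam) := by
    rw [hualg]
    exact IsLocalization.map_units (M := Submonoid.powers
      (1 + MvPolynomial.C lam * MvPolynomial.X 0 : MvPolynomial (Fin 2) R)) _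
      ⟨_, Submonoid.mem_powers _⟩
  constructor
  · intro Δ ε S hΔX hΔY hεX hεY hSX hSY I hI
    set u := (1 + algebraMap R (HA R lam) lam * hX R lam) with hu
    have hXI : hX R lam ^ p ∈ I := by
      rw [hI]; exact Ideal.subset_span (Set.mem_insert _ _)
    have hYI : hY R lam ^ p ∈ I := by
      rw [hI]; exact Ideal.subset_span (Set.mem_insert_of_mem _ rfl)
    have memΔ : ∀ a : HA R lam, a ^ p ∈ I →
        (a ^ p) ⊗ₜ[R] (1 : HA R lam) + (u ^ p) ⊗ₜ[R] (a ^ p) ∈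
          Ideal.map (Algebra.TensorProduct.includeLeft :
            HA R lam →ₐ[R] HA R lam ⊗[R] HA R lam) I ⊔
          Ideal.map (Algebra.TensorProduct.includeRight :
            HA R lam →ₐ[R] HA R lam ⊗[R] HA R lam) I := by
      intro a ha
      refine Ideal.add_mem _ ?_ ?_
      · exact Ideal.mem_sup_left (Ideal.mem_map_of_mem _ ha)
      · have : (u ^ p) ⊗ₜ[R] (a ^ p) = ((u ^ p) ⊗ₜ[R] 1) *
            ((Algebra.TensorProduct.includeRight :
              HA R lam →ₐ[R] HA R lam ⊗[R] HA R lam) (a ^ p)) := by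
          simp [Algebra.TensorProduct.tmul_mul_tmul]
        rw [this]
        exact Ideal.mem_sup_right (Ideal.mul_mem_left _ _ (Ideal.mem_map_of_mem _ ha))
    have key : ∀ a : HA R lam, Δ a = a ⊗ₜ 1 + u ⊗ₜ a →
        Δ (a ^ p) = (a ^ p) ⊗ₜ[R] (1 : HA R lam) + (u ^ p) ⊗ₜ[R] (a ^ p) := by
      intro a haΔ
      rw [map_pow, haΔ, frob hp hpS (a ⊗ₜ[R] 1) (u ⊗ₜ[R] a), Algebra.TensorProduct.tmul_pow,
        Algebra.TensorProduct.tmul_pow, one_pow]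
    have hSmem : ∀ a : HA R lam, a ^ p ∈ I → u * S a = -a → S (a ^ p) ∈ I := by
      intro a ha hsa
      have h1 : u ^ p * S (a ^ p) = (-1 : HA R lam) ^ p * a ^ p := by
        rw [map_pow, ← mul_pow, hsa, neg_pow a p]
      have h2 : S (a ^ p) = ↑(huunit.pow p).unit⁻¹ * ((-1 : HA R lam) ^ p * a ^ p) := by
        rw [← h1, ← mul_assoc, IsUnit.val_inv_mul, one_mul]
      rw [h2]
      exact Ideal.mul_mem_left _ _ (Ideal.mul_mem_left _ _ ha)
    refine ⟨by rw [key _ hΔX]; exact memΔ _ hXI,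
      by rw [key _ hΔY]; exact memΔ _ hYI, ?_, ?_, hSmem _ hXI hSX, hSmem _ hYI hSY⟩
    · rw [map_pow, hεX, zero_pow hp.ne_zero]
    · rw [map_pow, hεY, zero_pow hp.ne_zero]
  · -- quotient Hopf structure
    set c : Aq p R :=
      (1 + algebraMap R (Aq p R) lam * aX p R) with hc
    set v : Fin 2 → Aq p R ⊗[R] Aq p R :=
      ![aX p R ⊗ₜ[R] 1 + c ⊗ₜ[R] aX p R, aY p R ⊗ₜ[R] 1 + c ⊗ₜ[R] aY p R] with hv
    set f : MvPolynomial (Fin 2) R →ₐ[R] Aq p R ⊗[R] Aq p R :=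
      MvPolynomial.aeval v with hf
    have haX0 : aX p R ^ p = 0 := by
      rw [aX, ← map_pow, Ideal.Quotient.eq_zero_iff_mem]
      exact Ideal.subset_span (Set.mem_insert _ _)
    have haY0 : aY p R ^ p = 0 := by
      rw [aY, ← map_pow, Ideal.Quotient.eq_zero_iff_mem]
      exact Ideal.subset_span (Set.mem_insert_of_mem _ rfl)
    have hker : ∀ a ∈ Ideal.span ({MvPolynomial.X 0 ^ p, MvPolynomial.X 1 ^ p} :
        Set (MvPolynomial (Fin 2) R)), f a = 0 := by
      intro a ha
      refine (RingHom.mem_ker (f := f.toRingHom)).mp ?_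
      refine Ideal.span_le.mpr ?_ ha
      rintro x (rfl | rfl) <;>
        simp only [SetLike.mem_coe, RingHom.mem_ker, map_pow, hf, AlgHom.toRingHom_eq_coe, AlgHom.coe_toRingHom, MvPolynomial.aeval_X] <;>
        [(rw [show v 0 = aX p R ⊗ₜ[R] 1 + c ⊗ₜ[R] aX p R from rfl,
            frob hp hpA (aX p R ⊗ₜ[R] 1) (c ⊗ₜ[R] aX p R)]);
         (rw [show v 1 = aY p R ⊗ₜ[R] 1 + c ⊗ₜ[R] aY p R from rfl,
            frob hp hpA (aY p R ⊗ₜ[R] 1) (c ⊗ₜ[R] aY p R)])] <;>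
        rw [Algebra.TensorProduct.tmul_pow, Algebra.TensorProduct.tmul_pow] <;>
        simp [haX0, haY0]
    refine ⟨Ideal.Quotient.liftₐ _ f hker, ?_, ?_⟩
    · show Ideal.Quotient.liftₐ _ f hker (Ideal.Quotient.mk _ (MvPolynomial.X 0)) = _
      show f (MvPolynomial.X 0) = _
      simp [hf, hv]
    · show Ideal.Quotient.liftₐ _ f hker (Ideal.Quotient.mk _ (MvPolynomial.X 1)) = _
      show f (MvPolynomial.X 1) = _
      simp [hf, hv]
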